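/- If ψ and φ are synchronously automatic homeomorphisms of X^ω, then the composition ψ ∘ φ and the inverse ψ⁻¹ are synchronously automatic; consequently the set of all synchronously automatic homeomorphisms of X^ω is a group under composition. -/

import Mathlib

/-- Prepend a finite word `v` to an infinite sequence `w`. -/
def prependWord {X : Type*} (v : List X) (w : ℕ → X) : ℕ → X :=
  fun n => if h : n < v.length then v.get ⟨n, h⟩ else w (n - v.length)

/-- The partial map `ψ_{u,v}` of a map `ψ : X^ω → X^ω`, viewed as the set of pairs
`(w, w')` with `ψ (v·w) = u·w'`. -/
def partialMap {X : Type*} (ψ : (ℕ → X) → (ℕ → X)) (u v : List X) :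
    Set ((ℕ → X) × (ℕ → X)) :=
  {p | ψ (prependWord v p.1) = prependWord u p.2}

/-- A homeomorphism `ψ` of `X^ω` is synchronously automatic if the set of the partial maps
`ψ_{u,v}`, over all pairs of finite words `u, v` of equal length, is finite. -/
def SyncAutomatic {X : Type*} [TopologicalSpace X] (ψ : (ℕ → X) ≃ₜ (ℕ → X)) : Prop :=
  {S : Set ((ℕ → X) × (ℕ → X)) |
    ∃ u v : List X, u.length = v.length ∧ S = partialMap (⇑ψ) u v}.Finite

lemma prepend_split {X : Type*} (n : ℕ) (s : ℕ → X) :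
    prependWord (List.ofFn fun i : Fin n => s i) (fun k => s (k + n)) = s := by
  funext m
  simp only [prependWord, List.length_ofFn]
  split_ifs with h
  · simp [List.get_ofFn]
  · have : m - n + n = m := by omega
    simp [this]

/-- if `ψ` and `φ` are synchronously automatic homeomorphisms of `X^ω`, then
the composition `ψ ∘ φ` and the inverse `ψ⁻¹` are synchronously automatic; consequently
the set of synchronously automatic homeomorphisms of `X^ω` is a group under composition. -/
theorem syncAutomatic_comp_and_inv
    {X : Type*} [Fintype X] [TopologicalSpace X] [DiscreteTopology X]
    (hX : 2 ≤ Fintype.card X)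
    (ψ φ : (ℕ → X) ≃ₜ (ℕ → X)) (hψ : SyncAutomatic ψ) (hφ : SyncAutomatic φ) :
    SyncAutomatic (φ.trans ψ) ∧ SyncAutomatic ψ.symm := by
  set P := (ℕ → X) × (ℕ → X)
  set Fφ : Set (Set P) := {S | ∃ u v : List X, u.length = v.length ∧ S = partialMap (⇑φ) u v}
    with hFφ
  set Fψ : Set (Set P) := {S | ∃ u v : List X, u.length = v.length ∧ S = partialMap (⇑ψ) u v}
    with hFψ
  constructor
  · -- composition
    set U : Set (Set P × Set P) → Set P :=
      fun T => {p | ∃ AB ∈ T, ∃ z, (p.1, z) ∈ AB.1 ∧ (z, p.2) ∈ AB.2} with hU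
    have hGood : {T : Set (Set P × Set P) | T ⊆ Fφ ×ˢ Fψ}.Finite :=
      Set.Finite.finite_subsets (hφ.prod hψ)
    apply Set.Finite.subset (hGood.image U)
    rintro S ⟨u, v, huv, rfl⟩
    refine ⟨{AB | ∃ t : List X, t.length = v.length ∧
        AB.1 = partialMap (⇑φ) t v ∧ AB.2 = partialMap (⇑ψ) u t}, ?_, ?_⟩
    · rintro ⟨A, B⟩ ⟨t, ht, hA, hB⟩
      exact ⟨⟨t, v, ht, hA⟩, ⟨u, t, by rw [huv, ht], hB⟩⟩
    · ext p
      simp only [hU, Set.mem_setOf_eq, partialMap, Homeomorph.trans_apply]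
      constructor
      · rintro ⟨⟨A, B⟩, ⟨t, ht, hA, hB⟩, z, h1, h2⟩
        rw [hA] at h1; rw [hB] at h2
        simp only [partialMap, Set.mem_setOf_eq] at h1 h2
        rw [Set.mem_setOf_eq, h1]; exact h2
      · intro h
        set n := v.length
        set s := φ (prependWord v p.1) with hs
        refine ⟨(partialMap (⇑φ) (List.ofFn fun i : Fin n => s i) v,
                 partialMap (⇑ψ) u (List.ofFn fun i : Fin n => s i)),
          ⟨List.ofFn fun i : Fin n => s i, by simp, rfl, rfl⟩,
          fun k => s (k + n), ?_, ?_⟩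
        · show φ (prependWord v p.1) = _
          rw [prepend_split n s]
        · show ψ _ = _
          rw [prepend_split n s]; exact h
  · -- inverse
    apply Set.Finite.subset (hψ.image (fun A => Prod.swap ⁻¹' A))
    rintro S ⟨u, v, huv, rfl⟩
    refine ⟨partialMap (⇑ψ) v u, ⟨v, u, huv.symm, rfl⟩, ?_⟩
    ext p
    simp only [partialMap, Set.mem_preimage, Prod.swap, Set.mem_setOf_eq]
    constructor
    · intro h; rw [← h]; exact ψ.symm_apply_apply _
    · intro h; rw [← h]; exact ψ.apply_symm_apply _
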